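/- Let v be a vector in M₂^{⊗s} (s ≥ 1) satisfying E.v = 0, K.v = v, and π̂_j^(1)(v) = 0 for all j ∈ {1,...,s-1}, where π̂_j^(1) is the projection to the trivial subrepresentation in tensor positions j, j+1. Then v = 0. -/

import Mathlib

noncomputable section
open Finset

/-- `q` is a nonzero complex number that is not a root of unity. -/
def NotRootOfUnity (q : ℂ) : Prop := q ≠ 0 ∧ ∀ m : ℤ, m ≠ 0 → q ^ m ≠ 1

/-- The q-integer `[m]_q = (q^m - q^(-m))/(q - q⁻¹)`. -/
def qint (q : ℂ) (m : ℤ) : ℂ := (q ^ m - q ^ (-m)) / (q - q⁻¹)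

/-- The q-factorial `[n]_q! = ∏_{m=1}^n [m]_q`. -/
def qfact (q : ℂ) (n : ℕ) : ℂ := ∏ m ∈ Finset.range n, qint q ((m : ℤ) + 1)

/-- Coefficient model of the tensor power `M₂^{⊗s}` of the two-dimensional irreducible
`U_q(sl₂)`-module: a vector is the coefficient function of the basis
`e_{l₁} ⊗ ⋯ ⊗ e_{l_s}` (index `0` is the leftmost tensorand). -/
abbrev V (s : ℕ) := (Fin s → Fin 2) → ℂ

/-- The highest weight vector `e₀ ⊗ ⋯ ⊗ e₀` of `M₂^{⊗s}`. -/
def e0 (s : ℕ) : V s := fun m => if ∀ i, m i = 0 then 1 else 0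

/-- Action of `F` on `M₂^{⊗s}` via `Δ^(s)(F) = ∑ᵢ (K⁻¹)^{⊗(i-1)} ⊗ F ⊗ 1^{⊗(s-i)}`
(the first coproduct leg acts on the leftmost tensorand;
`F.e₀ = e₁`, `F.e₁ = 0`, `K⁻¹.e_l = q^{2l-1} e_l` in `M₂`). -/
def Fop (q : ℂ) (s : ℕ) (v : V s) : V s :=
  fun m => ∑ i : Fin s,
    (∏ j : Fin s, if j < i then q ^ (2 * ((m j : ℕ) : ℤ) - 1) else 1) *
      (if m i = 1 then v (Function.update m i 0) else 0)

/-- Action of `E` on `M₂^{⊗s}` via `Δ^(s)(E) = ∑ᵢ 1^{⊗(i-1)} ⊗ E ⊗ K^{⊗(s-i)}`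
(`E.e₁ = e₀`, `E.e₀ = 0`, `K.e_l = q^{1-2l} e_l` in `M₂`). -/
def Eop (q : ℂ) (s : ℕ) (v : V s) : V s :=
  fun m => ∑ i : Fin s,
    (∏ j : Fin s, if i < j then q ^ (1 - 2 * ((m j : ℕ) : ℤ)) else 1) *
      (if m i = 0 then v (Function.update m i 1) else 0)

/-- Action of `K` on `M₂^{⊗s}` (diagonal: `K.e_l = q^{1-2l} e_l` in each tensorand). -/
def Kop (q : ℂ) (s : ℕ) (v : V s) : V s :=
  fun m => (∏ j : Fin s, q ^ (1 - 2 * ((m j : ℕ) : ℤ))) * v m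

/-- The vector `θ_k^(s) = F^k.(e₀ ⊗ ⋯ ⊗ e₀)` in `M₂^{⊗s}`. -/
def theta (q : ℂ) (s k : ℕ) : V s := (Fop q s)^[k] (e0 s)

/-- Insert the values `a`, `b` at (0-indexed) positions `j`, `j+1` into the multi-index `m`. -/
def insert2 (s j : ℕ) (m : Fin (s - 2) → Fin 2) (a b : Fin 2) : Fin s → Fin 2 :=
  fun i =>
    if (i : ℕ) < j then (if h : (i : ℕ) < s - 2 then m ⟨i, h⟩ else 0)
    else if (i : ℕ) = j then a
    else if (i : ℕ) = j + 1 then b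
    else (if h : (i : ℕ) - 2 < s - 2 then m ⟨(i : ℕ) - 2, h⟩ else 0)

/-- Matrix coefficients of the `U_q(sl₂)`-equivariant projection `π̂^(1) : M₂ ⊗ M₂ → ℂ`
onto the trivial summand (normalized so that the Clebsch–Gordan singlet maps to `1`):
`π̂(e₀⊗e₀) = π̂(e₁⊗e₁) = 0`, `π̂(e₀⊗e₁) = (q⁻¹-q)/[2]_q`, `π̂(e₁⊗e₀) = (1-q⁻²)/[2]_q`
(the first argument is the left tensorand). -/
def pival (q : ℂ) (a b : Fin 2) : ℂ :=
  if a = 0 ∧ b = 1 then (q⁻¹ - q) / qint q 2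
  else if a = 1 ∧ b = 0 then (1 - q ^ (-2 : ℤ)) / qint q 2
  else 0

/-- The projection `π̂_j^(1) : M₂^{⊗s} → M₂^{⊗(s-2)}` contracting the tensorands at
(0-indexed) positions `j`, `j+1` with `π̂^(1)`. -/
def pihat (q : ℂ) (s j : ℕ) (v : V s) : V (s - 2) :=
  fun m => ∑ a : Fin 2, ∑ b : Fin 2, pival q a b * v (insert2 s j m a b)


namespace QAux

lemma fin2_eq_one {x : Fin 2} (h : x ≠ 0) : x = 1 := by omega
lemma fin2_eq_zero {x : Fin 2} (h : x ≠ 1) : x = 0 := by omega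

lemma prod_zpow_eq {ι : Type*} (q : ℂ) (hq : q ≠ 0) (s : Finset ι) (f : ι → ℤ) :
    ∏ i ∈ s, q ^ f i = q ^ ∑ i ∈ s, f i := by
  classical
  induction s using Finset.induction with
  | empty => simp
  | insert _ _ h ih => rw [Finset.prod_insert h, Finset.sum_insert h, ih, ← zpow_add₀ hq]

lemma q_neg_two_ne_one {q : ℂ} (hq : NotRootOfUnity q) : q ^ (-2:ℤ) ≠ 1 := hq.2 (-2) (by norm_num)

lemma one_sub_q_neg_two_ne {q : ℂ} (hq : NotRootOfUnity q) : (1:ℂ) - q ^ (-2:ℤ) ≠ 0 := by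
  intro h
  exact q_neg_two_ne_one hq (by linear_combination -h)

lemma qint2_ne {q : ℂ} (hq : NotRootOfUnity q) : qint q 2 ≠ 0 := by
  have h0 := hq.1
  have h4 : q ^ (4:ℤ) ≠ 1 := hq.2 4 (by norm_num)
  have h2 : q ^ (2:ℤ) ≠ 1 := hq.2 2 (by norm_num)
  have hnum : q ^ (2:ℤ) - q ^ (-(2:ℤ)) ≠ 0 := by
    intro h
    apply h4
    have he : q ^ (2:ℤ) = q ^ (-(2:ℤ)) := sub_eq_zero.mp h
    have h' : q ^ (2:ℤ) * q ^ (2:ℤ) = q ^ (-(2:ℤ)) * q ^ (2:ℤ) := by rw [← he]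
    rw [← zpow_add₀ h0, ← zpow_add₀ h0] at h'
    norm_num at h'
    exact h'
  have hden : q - q⁻¹ ≠ 0 := by
    intro h
    apply h2
    have he : q = q⁻¹ := sub_eq_zero.mp h
    have h' : q * q = q⁻¹ * q := by rw [← he]
    rw [inv_mul_cancel₀ h0] at h'
    rw [show (2:ℤ) = 1 + 1 by norm_num, zpow_add₀ h0, zpow_one, h']
  exact div_ne_zero hnum hden

lemma finne {s : ℕ} (i : Fin s) (c : ℕ) (hc : c < s) (h : (i:ℕ) ≠ c) : i ≠ ⟨c, hc⟩ := by
  intro he; exact h (by rw [he])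

lemma insert2_update (s j : ℕ) (hj : j + 2 ≤ s) (m : Fin s → Fin 2) (a b : Fin 2) :
    insert2 s j (fun i => m ⟨if (i:ℕ) < j then (i:ℕ) else (i:ℕ) + 2, by split <;> omega⟩) a b
      = Function.update (Function.update m ⟨j, by omega⟩ a) ⟨j+1, by omega⟩ b := by
  funext i
  simp only [insert2, Function.update_apply]
  rcases lt_trichotomy (i:ℕ) j with h1 | h1 | h1
  · rw [if_pos h1, dif_pos (show (i:ℕ) < s - 2 by omega)]
    rw [if_neg (finne i (j+1) (by omega) (by omega)), if_neg (finne i j (by omega) (by omega))]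
    exact congrArg m (Fin.ext (by simp only [Fin.val_mk]; rw [if_pos h1]))
  · rw [if_neg (by omega), if_pos h1, if_neg (finne i (j+1) (by omega) (by omega)),
      if_pos (Fin.ext (by simp [h1]))]
  · rcases Nat.eq_or_lt_of_le h1 with h2 | h2
    · rw [if_neg (by omega), if_neg (by omega), if_pos h2.symm,
        if_pos (Fin.ext (by simp [← h2]))]
    · rw [if_neg (by omega), if_neg (by omega), if_neg (by omega),
        dif_pos (show (i:ℕ) - 2 < s - 2 by omega),
        if_neg (finne i (j+1) (by omega) (by omega)), if_neg (finne i j (by omega) (by omega))]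
      exact congrArg m (Fin.ext (by simp only [Fin.val_mk]; rw [if_neg (by omega)]; omega))

lemma pival00 (q : ℂ) : pival q 0 0 = 0 := by simp [pival]
lemma pival11 (q : ℂ) : pival q 1 1 = 0 := by simp [pival]
lemma pival01 (q : ℂ) : pival q 0 1 = (q⁻¹ - q) / qint q 2 := by simp [pival]
lemma pival10 (q : ℂ) : pival q 1 0 = (1 - q ^ (-2:ℤ)) / qint q 2 := by simp [pival]

lemma swap_rel (q : ℂ) (hq : NotRootOfUnity q) (s : ℕ) (v : V s)
    (hproj : ∀ j : ℕ, j + 2 ≤ s → pihat q s j v = 0)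
    (j : ℕ) (hj : j + 2 ≤ s) (hj1 : j < s) (hj2 : j + 1 < s) (m : Fin s → Fin 2)
    (h1 : m ⟨j, hj1⟩ = 1) (h0 : m ⟨j+1, hj2⟩ = 0) :
    v m = q * v (Function.update (Function.update m ⟨j, hj1⟩ 0) ⟨j+1, hj2⟩ 1) := by
  have h := congrFun (hproj j hj)
    (fun i => m ⟨if (i:ℕ) < j then (i:ℕ) else (i:ℕ) + 2, by split <;> omega⟩)
  simp only [pihat, Fin.sum_univ_two, insert2_update s j hj m, Pi.zero_apply] at h
  rw [pival00, pival01, pival10, pival11] at h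
  have hm : Function.update (Function.update m ⟨j, hj1⟩ (1:Fin 2)) ⟨j+1, hj2⟩ (0:Fin 2) = m := by
    funext l
    simp only [Function.update_apply]
    split_ifs with ha hb
    · rw [ha]; exact h0.symm
    · rw [hb]; exact h1.symm
    · rfl
  rw [hm] at h
  have hD := qint2_ne hq
  have hB := one_sub_q_neg_two_ne hq
  have hq0 := hq.1
  set x := v (Function.update (Function.update m ⟨j, hj1⟩ 0) ⟨j+1, hj2⟩ 1) with hx
  simp only [zero_mul, zero_add, add_zero] at h
  rw [div_mul_eq_mul_div, div_mul_eq_mul_div, ← add_div, div_eq_zero_iff] at h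
  rcases h with h | h
  · have hinv : q * q ^ (-2:ℤ) = q⁻¹ := by
      rw [show (-2:ℤ) = -1 + -1 by norm_num, zpow_add₀ hq0, zpow_neg_one]
      field_simp
    have h3 : (1 - q ^ (-2:ℤ)) * (v m - q * x) = 0 := by linear_combination h + x * hinv
    rcases mul_eq_zero.mp h3 with h4 | h4
    · exact absurd h4 hB
    · linear_combination h4
  · exact absurd h hD

end QAux

namespace QAux

lemma weight_supp (q : ℂ) (hq : NotRootOfUnity q) (s : ℕ) (v : V s)
    (hK : Kop q s v = v) (m : Fin s → Fin 2)
    (h : (s:ℤ) ≠ 2 * ∑ i, ((m i : ℕ) : ℤ)) : v m = 0 := by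
  have h1 := congrFun hK m
  unfold Kop at h1
  rw [prod_zpow_eq q hq.1] at h1
  have hsum : ∑ j : Fin s, (1 - 2 * ((m j : ℕ) : ℤ)) = (s:ℤ) - 2 * ∑ i, ((m i : ℕ) : ℤ) := by
    rw [Finset.sum_sub_distrib, ← Finset.mul_sum]
    simp
  rw [hsum] at h1
  have hne : q ^ ((s:ℤ) - 2 * ∑ i, ((m i : ℕ) : ℤ)) ≠ 1 := hq.2 _ (by omega)
  by_contra hv
  exact hne ((mul_eq_right₀ hv).mp h1)

/-- canonical sorted multi-index with k ones at the end -/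
def base (s k : ℕ) : Fin s → Fin 2 := fun i => if (i:ℕ) < s - k then 0 else 1

lemma sorted_eq_base (s k : ℕ) (m : Fin s → Fin 2)
    (hcnt : ∑ i, ((m i : ℕ)) = k)
    (hns : ∀ j (hj : j + 2 ≤ s), ¬(m ⟨j, by omega⟩ = 1 ∧ m ⟨j+1, by omega⟩ = 0)) :
    m = base s k := by
  classical
  -- upward closure
  have hup : ∀ d (i : Fin s) (hd : (i:ℕ) + d < s), m i = 1 → m ⟨(i:ℕ) + d, hd⟩ = 1 := by
    intro d
    induction d with
    | zero =>
      intro i hd h1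
      have he : (⟨(i:ℕ) + 0, hd⟩ : Fin s) = i := Fin.ext (by simp)
      rw [he]; exact h1
    | succ n ih =>
      intro i hd h1
      have hprev : m ⟨(i:ℕ) + n, by omega⟩ = 1 := ih i (by omega) h1
      have hne := hns ((i:ℕ) + n) (by omega)
      have he : (⟨(i:ℕ) + n + 1, by omega⟩ : Fin s) = ⟨(i:ℕ) + (n+1), hd⟩ :=
        Fin.ext (by simp [Nat.add_assoc])
      by_contra hc
      apply hne
      refine ⟨hprev, ?_⟩
      rw [he]
      exact fin2_eq_zero hc
  have hup' : ∀ i l : Fin s, m i = 1 → i ≤ l → m l = 1 := by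
    intro i l h1 hle
    have : m ⟨(i:ℕ) + ((l:ℕ) - (i:ℕ)), by omega⟩ = 1 := hup _ i (by omega) h1
    convert this using 2
    exact Fin.ext (by simp; omega)
  set S := Finset.univ.filter (fun i : Fin s => m i = 1) with hS
  have hcard : S.card = k := by
    rw [hS, Finset.card_filter, ← hcnt]
    refine Finset.sum_congr rfl (fun i _ => ?_)
    by_cases h : m i = 1
    · simp [h]
    · simp [h, fin2_eq_zero h]
  have hk_le : k ≤ s := by
    rw [← hcard, hS]
    exact (Finset.card_filter_le _ _).trans (by simp)
  have hiff : ∀ i : Fin s, m i = 1 ↔ s ≤ (i:ℕ) + k := by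
    intro i
    constructor
    · intro h1
      have hsub : Finset.Ici i ⊆ S := by
        intro l hl
        rw [Finset.mem_Ici] at hl
        simp only [hS, Finset.mem_filter, Finset.mem_univ, true_and]
        exact hup' i l h1 hl
      have := Finset.card_le_card hsub
      rw [Fin.card_Ici, hcard] at this
      omega
    · intro hle
      by_contra hc
      have h0 : m i = 0 := fin2_eq_zero hc
      have hsub : S ⊆ Finset.Ioi i := by
        intro l hl
        simp only [hS, Finset.mem_filter, Finset.mem_univ, true_and] at hl
        rw [Finset.mem_Ioi]
        by_contra hle'
        push_neg at hle'
        have := hup' l i hl hle'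
        rw [this] at h0
        exact absurd h0 (by decide)
      have := Finset.card_le_card hsub
      rw [Fin.card_Ioi, hcard] at this
      omega
  funext i
  unfold base
  by_cases h : (i:ℕ) < s - k
  · rw [if_pos h]
    have : ¬ (s ≤ (i:ℕ) + k) := by omega
    exact fin2_eq_zero (fun hc => this ((hiff i).mp hc))
  · rw [if_neg h]
    exact (hiff i).mpr (by omega)

end QAux

namespace QAux

def W (s : ℕ) (m : Fin s → Fin 2) : ℕ := ∑ i : Fin s, (if m i = 1 then s - (i:ℕ) else 0)

lemma sum_two_split (s : ℕ) (g g' : Fin s → ℕ) (a b : Fin s) (hab : a ≠ b)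
    (hg : ∀ i, i ≠ a → i ≠ b → g i = g' i) :
    ∑ i, g i + (g' a + g' b) = ∑ i, g' i + (g a + g b) := by
  classical
  have hsub : ({a, b} : Finset (Fin s)) ⊆ Finset.univ := by simp
  have h1 := Finset.sum_sdiff (f := g) hsub
  have h2 := Finset.sum_sdiff (f := g') hsub
  have h3 : ∑ i ∈ Finset.univ \ {a, b}, g i = ∑ i ∈ Finset.univ \ {a, b}, g' i := by
    refine Finset.sum_congr rfl (fun i hi => ?_)
    simp only [Finset.mem_sdiff, Finset.mem_insert, Finset.mem_singleton] at hi
    exact hg i (fun h => hi.2 (Or.inl h)) (fun h => hi.2 (Or.inr h))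
  rw [Finset.sum_pair hab] at h1 h2
  omega

lemma W_swap (s j : ℕ) (hj1 : j < s) (hj2 : j + 1 < s) (m : Fin s → Fin 2)
    (h1 : m ⟨j, hj1⟩ = 1) (h0 : m ⟨j+1, hj2⟩ = 0) :
    W s (Function.update (Function.update m ⟨j, hj1⟩ 0) ⟨j+1, hj2⟩ 1) + 1 = W s m := by
  classical
  set m2 := Function.update (Function.update m ⟨j, hj1⟩ (0:Fin 2)) ⟨j+1, hj2⟩ 1 with hm2
  have hab : (⟨j, hj1⟩ : Fin s) ≠ ⟨j+1, hj2⟩ := by simp [Fin.ext_iff]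
  have key := sum_two_split s
    (fun i => if m2 i = 1 then s - (i:ℕ) else 0)
    (fun i => if m i = 1 then s - (i:ℕ) else 0)
    ⟨j, hj1⟩ ⟨j+1, hj2⟩ hab
    (fun i hia hib => by
      rw [hm2, Function.update_of_ne hib, Function.update_of_ne hia])
  dsimp only at key
  have hma : m2 ⟨j, hj1⟩ = 0 := by
    rw [hm2, Function.update_of_ne hab, Function.update_self]
  have hmb : m2 ⟨j+1, hj2⟩ = 1 := by
    rw [hm2, Function.update_self]
  rw [hma, hmb, h1, h0] at key
  simp only [Fin.val_mk] at key
  norm_num at key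
  unfold W
  omega

lemma class_zero (q : ℂ) (hq : NotRootOfUnity q) (s : ℕ) (v : V s)
    (hproj : ∀ j : ℕ, j + 2 ≤ s → pihat q s j v = 0)
    (k : ℕ) (hbase : v (base s k) = 0) :
    ∀ N (m : Fin s → Fin 2), W s m ≤ N → (∑ i, ((m i : ℕ)) = k) → v m = 0 := by
  intro N
  induction N with
  | zero =>
    intro m hW hcnt
    have hmb : m = base s k := by
      apply sorted_eq_base s k m hcnt
      intro j hj
      rintro ⟨ha, -⟩
      have : (if m ⟨j, by omega⟩ = 1 then s - j else 0) ≤ W s m := by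
        have := Finset.single_le_sum (f := fun i : Fin s => if m i = 1 then s - (i:ℕ) else 0)
          (fun _ _ => Nat.zero_le _) (Finset.mem_univ (⟨j, by omega⟩ : Fin s))
        unfold W
        simpa using this
      rw [if_pos ha] at this
      omega
    rw [hmb]; exact hbase
  | succ n ih =>
    intro m hW hcnt
    by_cases hex : ∃ j, ∃ hj1 : j < s, ∃ hj2 : j + 1 < s,
        j + 2 ≤ s ∧ m ⟨j, hj1⟩ = 1 ∧ m ⟨j+1, hj2⟩ = 0
    · obtain ⟨j, hj1, hj2, hj, ha, hb⟩ := hex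
      rw [swap_rel q hq s v hproj j hj hj1 hj2 m ha hb]
      have hWs := W_swap s j hj1 hj2 m ha hb
      have hab : (⟨j, hj1⟩ : Fin s) ≠ ⟨j+1, hj2⟩ := by simp [Fin.ext_iff]
      have hcnt2 : ∑ i, (((Function.update (Function.update m ⟨j, hj1⟩ 0) ⟨j+1, hj2⟩ 1) i : ℕ)) = k := by
        have key := sum_two_split s
          (fun i => (((Function.update (Function.update m ⟨j, hj1⟩ (0:Fin 2)) ⟨j+1, hj2⟩ 1) i : ℕ)))
          (fun i => ((m i : ℕ)))
          ⟨j, hj1⟩ ⟨j+1, hj2⟩ hab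
          (fun i hia hib => by
            rw [Function.update_of_ne hib, Function.update_of_ne hia])
        rw [Function.update_of_ne hab, Function.update_self, Function.update_self, ha, hb] at key
        omega
      rw [ih _ (by omega) hcnt2, mul_zero]
    · push_neg at hex
      have hmb : m = base s k := by
        apply sorted_eq_base s k m hcnt
        intro j hj
        rintro ⟨ha, hb⟩
        exact absurd hb (hex j (by omega) (by omega) hj ha)
      rw [hmb]; exact hbase

end QAux

namespace QAux

def mstar (s k : ℕ) : Fin s → Fin 2 := fun l => if k + 1 ≤ (l:ℕ) then 1 else 0

def uvec (s k i : ℕ) (hi : i < s) : Fin s → Fin 2 := Function.update (mstar s k) ⟨i, hi⟩ 1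

lemma uvec_congr (s k : ℕ) {i i' : ℕ} (h : i = i') (hi : i < s) (hi' : i' < s) :
    uvec s k i hi = uvec s k i' hi' := by subst h; rfl

lemma chain (q : ℂ) (hq : NotRootOfUnity q) (s : ℕ) (v : V s)
    (hproj : ∀ j : ℕ, j + 2 ≤ s → pihat q s j v = 0)
    (k : ℕ) (hk : 1 ≤ k) (hs : s = 2 * k) :
    ∀ d, d ≤ k → v (uvec s k (k - d) (by omega)) = q ^ d * v (uvec s k k (by omega)) := by
  intro d
  induction d with
  | zero =>
    intro _
    rw [uvec_congr s k (by omega : k - 0 = k) (by omega) (by omega), pow_zero, one_mul]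
  | succ n ih =>
    intro hd
    set i := k - (n + 1) with hi
    have hi1 : i < s := by omega
    have hi2 : i + 1 < s := by omega
    have hu1 : uvec s k i hi1 ⟨i, hi1⟩ = 1 := Function.update_self _ _ _
    have hu0 : uvec s k i hi1 ⟨i+1, hi2⟩ = 0 := by
      unfold uvec
      rw [Function.update_of_ne (by simp [Fin.ext_iff])]
      simp only [mstar]
      rw [if_neg (by omega)]
    have hswap := swap_rel q hq s v hproj i (by omega) hi1 hi2 _ hu1 hu0
    have hcollapse : Function.update (Function.update (uvec s k i hi1) ⟨i, hi1⟩ 0) ⟨i+1, hi2⟩ 1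
        = uvec s k (i+1) hi2 := by
      unfold uvec
      rw [Function.update_idem]
      have h0 : mstar s k ⟨i, hi1⟩ = 0 := by
        simp only [mstar]; rw [if_neg (by omega)]
      rw [← h0, Function.update_eq_self]
    rw [hcollapse] at hswap
    rw [uvec_congr s k (show i + 1 = k - n by omega) hi2 (by omega)] at hswap
    rw [hswap, ih (by omega), pow_succ]
    ring

end QAux

namespace QAux

lemma exp_sum (s k t : ℕ) (ht : t ≤ k) (hs : s = 2 * k) (hk : 1 ≤ k) :
    ∑ x ∈ Finset.range s, (if t < x then (1 - 2 * (if k + 1 ≤ x then (1:ℤ) else 0)) else 0)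
      = 1 - (t:ℤ) := by
  have hrw : ∀ x ∈ Finset.range s,
      (if t < x then (1 - 2 * (if k + 1 ≤ x then (1:ℤ) else 0)) else 0)
        = (if x ∈ Finset.Ico (t+1) (k+1) then (1:ℤ) else 0)
          - (if x ∈ Finset.Ico (k+1) s then (1:ℤ) else 0) := by
    intro x hx
    rw [Finset.mem_range] at hx
    simp only [Finset.mem_Ico]
    split_ifs <;> omega
  rw [Finset.sum_congr rfl hrw, Finset.sum_sub_distrib]
  rw [Finset.sum_ite_mem, Finset.sum_ite_mem]
  rw [Finset.inter_eq_right.mpr (by intro x hx; rw [Finset.mem_Ico] at hx; simp; omega),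
    Finset.inter_eq_right.mpr (by intro x hx; rw [Finset.mem_Ico] at hx; simp; omega)]
  simp only [Finset.sum_const, Nat.card_Ico, nsmul_eq_mul, mul_one]
  omega

lemma base_coeff_zero (q : ℂ) (hq : NotRootOfUnity q) (s : ℕ) (v : V s)
    (hE : Eop q s v = 0)
    (hproj : ∀ j : ℕ, j + 2 ≤ s → pihat q s j v = 0)
    (k : ℕ) (hk : 1 ≤ k) (hs : s = 2 * k) :
    v (base s k) = 0 := by
  have hq0 := hq.1
  have hbu : base s k = uvec s k k (by omega) := by
    funext l
    simp only [base, uvec, mstar, Function.update_apply, Fin.ext_iff]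
    split_ifs <;> first | rfl | omega
  set c := v (uvec s k k (by omega)) with hc
  have h := congrFun hE (mstar s k)
  simp only [Eop, Pi.zero_apply] at h
  -- rewrite each term
  have hterm : ∀ i : Fin s,
      (∏ j : Fin s, if i < j then q ^ (1 - 2 * ((mstar s k j : ℕ) : ℤ)) else 1) *
        (if mstar s k i = 0 then v (Function.update (mstar s k) i 1) else 0)
      = if (i:ℕ) ≤ k then q ^ (1 - (i:ℤ)) * (q ^ (k - (i:ℕ)) * c) else 0 := by
    intro i
    by_cases hik : (i:ℕ) ≤ k
    · rw [if_pos hik]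
      have hm0 : mstar s k i = 0 := by simp only [mstar]; rw [if_neg (by omega)]
      rw [if_pos hm0]
      -- the coefficient
      have hcoef : (∏ j : Fin s, if i < j then q ^ (1 - 2 * ((mstar s k j : ℕ) : ℤ)) else 1)
          = q ^ (1 - (i:ℤ)) := by
        have h1 : ∀ j : Fin s, (if i < j then q ^ (1 - 2 * ((mstar s k j : ℕ) : ℤ)) else 1)
            = q ^ (if (i:ℕ) < (j:ℕ) then (1 - 2 * (if k + 1 ≤ (j:ℕ) then (1:ℤ) else 0)) else 0) := by
          intro j
          have hcast : ((mstar s k j : ℕ) : ℤ) = if k + 1 ≤ (j:ℕ) then (1:ℤ) else 0 := by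
            simp only [mstar]; split_ifs <;> rfl
          by_cases h' : i < j
          · rw [if_pos h', if_pos (show (i:ℕ) < (j:ℕ) from h'), hcast]
          · rw [if_neg h', if_neg (show ¬((i:ℕ) < (j:ℕ)) from h'), zpow_zero]
        rw [Finset.prod_congr rfl (fun j _ => h1 j)]
        rw [Fin.prod_univ_eq_prod_range
          (fun x => q ^ (if (i:ℕ) < x then (1 - 2 * (if k + 1 ≤ x then (1:ℤ) else 0)) else 0))]
        rw [prod_zpow_eq q hq0]
        rw [exp_sum s k (i:ℕ) hik hs hk]
      rw [hcoef]
      -- the vector value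
      have hu : Function.update (mstar s k) i 1 = uvec s k (i:ℕ) i.isLt := by
        unfold uvec
        congr 1
      rw [hu]
      have hchain := chain q hq s v hproj k hk hs (k - (i:ℕ)) (by omega)
      rw [uvec_congr s k (show k - (k - (i:ℕ)) = (i:ℕ) by omega) (by omega) i.isLt] at hchain
      rw [hchain]
    · rw [if_neg hik]
      have hm1 : mstar s k i = 1 := by simp only [mstar]; rw [if_pos (by omega)]
      rw [if_neg (by rw [hm1]; decide), mul_zero]
  rw [Finset.sum_congr rfl (fun i _ => hterm i)] at h
  rw [Fin.sum_univ_eq_sum_range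
    (fun x => if x ≤ k then q ^ (1 - (x:ℤ)) * (q ^ (k - x) * c) else 0)] at h
  rw [← Finset.sum_subset (Finset.range_subset_range.mpr (by omega : k + 1 ≤ s))
    (fun x _ hx => by rw [Finset.mem_range, not_lt] at hx; rw [if_neg (by omega)])] at h
  have hgeom : ∀ x ∈ Finset.range (k+1),
      (if x ≤ k then q ^ (1 - (x:ℤ)) * (q ^ (k - x) * c) else 0)
        = (c * q ^ ((k:ℤ) + 1)) * (q ^ (-2:ℤ)) ^ x := by
    intro x hx
    rw [Finset.mem_range] at hx
    rw [if_pos (by omega)]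
    have h1 : (q : ℂ) ^ (k - x) = q ^ (((k:ℤ) - (x:ℤ))) := by
      rw [← zpow_natCast]
      congr 1
      omega
    rw [h1, ← zpow_natCast (q ^ (-2:ℤ)) x, ← zpow_mul]
    have h2 : q ^ ((1:ℤ) - (x:ℤ)) * q ^ ((k:ℤ) - (x:ℤ)) = q ^ ((k:ℤ) + 1) * q ^ ((-2) * (x:ℤ)) := by
      rw [← zpow_add₀ hq0, ← zpow_add₀ hq0]
      congr 1
      ring
    linear_combination c * h2
  rw [Finset.sum_congr rfl hgeom, ← Finset.mul_sum] at h
  rw [geom_sum_eq (q_neg_two_ne_one hq) (k+1)] at h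
  have hd : (q ^ (-2:ℤ)) ^ (k+1) - 1 ≠ 0 := by
    intro h'
    have : (q ^ (-2:ℤ)) ^ (k+1) = 1 := by linear_combination h'
    rw [← zpow_natCast (q ^ (-2:ℤ)) (k+1), ← zpow_mul] at this
    exact hq.2 _ (by push_cast; omega) this
  have hd2 : (q ^ (-2:ℤ)) - 1 ≠ 0 := by
    intro h'
    exact q_neg_two_ne_one hq (by linear_combination h')
  rcases mul_eq_zero.mp h with h' | h'
  · rcases mul_eq_zero.mp h' with h'' | h''
    · rw [hbu, ← hc]; exact h''
    · exact absurd h'' (zpow_ne_zero _ hq0)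
  · exact absurd h' (div_ne_zero hd hd2)

end QAux

/-- If `v ∈ M₂^{⊗s}` (`s ≥ 1`) satisfies `E.v = 0`, `K.v = v`, and `π̂_j^(1)(v) = 0`
for all `j ∈ {1,…,s-1}` (0-indexed: all `j` with `j+2 ≤ s`), then `v = 0`. -/
theorem invariant_vector_with_vanishing_projections_is_zero
    (q : ℂ) (hq : NotRootOfUnity q) (s : ℕ) (hs : 1 ≤ s) (v : V s)
    (hE : Eop q s v = 0) (hK : Kop q s v = v)
    (hproj : ∀ j : ℕ, j + 2 ≤ s → pihat q s j v = 0) :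
    v = 0 := by
  funext m
  simp only [Pi.zero_apply]
  by_cases hw : (s:ℤ) = 2 * ∑ i, ((m i : ℕ) : ℤ)
  · set k := ∑ i, ((m i : ℕ)) with hk
    have hcast : ∑ i, ((m i : ℕ) : ℤ) = (k : ℤ) := by
      rw [hk]
      push_cast
      rfl
    have hsk : s = 2 * k := by omega
    have hk1 : 1 ≤ k := by omega
    have hbase0 : v (QAux.base s k) = 0 :=
      QAux.base_coeff_zero q hq s v hE hproj k hk1 hsk
    exact QAux.class_zero q hq s v hproj k hbase0 (QAux.W s m) m le_rfl rfl
  · exact QAux.weight_supp q hq s v hK m hw
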